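/- Let H be a real Hilbert space, N ≥ 1, and T_1, …, T_N : H → H nonexpansive maps with S := ⋂_{i=1}^N Fix(T_i) ≠ ∅, satisfying the Bauschke condition: for every k ∈ {0, …, N−1}, S = Fix(T_{[N+k]} ∘ ⋯ ∘ T_{[1+k]}), where [m] denotes the unique index in {1,…,N} congruent to m modulo N. Let κ, η > 0 and F : H → H with ‖F(x) − F(y)‖ ≤ κ‖x − y‖ and ⟨F(x) − F(y), x − y⟩ ≥ η‖x − y‖² for all x, y ∈ H. Fix μ ∈ (0, 2η/κ²) and a sequence (λ_n) ⊆ (0,1] with λ_n → 0, Σ_{n=1}^∞ λ_n = ∞ and Σ_{n=1}^∞ |λ_n − λ_{n+N}| < ∞. Then for any u₀ ∈ H, the sequence defined by u_{n+1} := T_{[n+1]}(u_n) − λ_{n+1}·μ·F(T_{[n+1]}(u_n)) converges strongly to the unique point u* ∈ S satisfying ⟨v − u*, F(u*)⟩ ≥ 0 for all v ∈ S; in particular such a point u* exists and is unique. -/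

import Mathlib

open scoped RealInnerProductSpace

/-- `cyc N m` is the unique index in `{1, …, N}` congruent to `m` modulo `N`. -/
def cyc (N m : ℕ) : ℕ := if m % N = 0 then N else m % N

/-- `cycComp T N k` is the composition `T [N+k] ∘ ⋯ ∘ T [1+k]`
(apply `T [1+k]` first, then `T [2+k]`, …, finally `T [N+k]`). -/
def cycComp {H : Type*} (T : ℕ → H → H) (N k : ℕ) (x : H) : H :=
  (List.range N).foldl (fun y j => T (cyc N (j + 1 + k)) y) x

open Filter

section AuxLemmas

/-- Ultrafilter limit of a bounded real sequence exists. -/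
lemma exists_ulim (𝒰 : Ultrafilter ℕ) (f : ℕ → ℝ) (M : ℝ) (hf : ∀ n, |f n| ≤ M) :
    ∃ L, L ∈ Set.Icc (-M) M ∧ Tendsto f (𝒰 : Filter ℕ) (nhds L) := by
  have h1 : (𝒰.map f : Filter ℝ) ≤ Filter.principal (Set.Icc (-M) M) := by
    rw [Ultrafilter.coe_map, Filter.le_principal_iff, Filter.mem_map]
    exact Filter.univ_mem' fun n => abs_le.1 (hf n)
  obtain ⟨L, hL, h2⟩ := isCompact_Icc.ultrafilter_le_nhds (𝒰.map f) h1
  exact ⟨L, hL, by rwa [Ultrafilter.coe_map] at h2⟩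

/-- Xu's lemma. -/
lemma xu_lemma (a γ δ c : ℕ → ℝ) (ha : ∀ n, 0 ≤ a n)
    (hγ : ∀ n, 0 ≤ γ n) (hγ1 : ∀ n, γ n ≤ 1)
    (hγdiv : Tendsto (fun n => ∑ i ∈ Finset.range n, γ i) atTop atTop)
    (hδ : ∀ ε > 0, ∀ᶠ n in atTop, δ n ≤ ε)
    (hc : ∀ n, 0 ≤ c n) (hcs : Summable c)
    (hrec : ∀ n, a (n + 1) ≤ (1 - γ n) * a n + γ n * δ n + c n) :
    Tendsto a atTop (nhds 0) := by
  have key : ∀ ε > 0, ∀ᶠ n in atTop, a n < ε := by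
    intro ε hε
    set ε₁ := ε / 4 with hε₁def
    have hε₁ : 0 < ε₁ := by positivity
    obtain ⟨N₁, hN₁⟩ := (hδ ε₁ hε₁).exists_forall_of_atTop
    -- tail of c
    have htail : Tendsto (fun m => ∑' i, c (i + m)) atTop (nhds 0) := by
      exact_mod_cast tendsto_sum_nat_add c
    obtain ⟨N₂, hN₂⟩ := (htail.eventually (eventually_le_nhds hε₁)).exists_forall_of_atTop
    set m := max N₁ N₂ with hm
    have htail_m : ∑' i, c (i + m) ≤ ε₁ := hN₂ m (le_max_right _ _)
    have htailnn : 0 ≤ ∑' i, c (i + m) := tsum_nonneg fun i => hc _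
    have hsum_le : ∀ n, ∑ i ∈ Finset.Ico m n, c i ≤ ∑' i, c (i + m) := by
      intro n
      rcases le_or_gt m n with h | h
      · rw [Finset.sum_Ico_eq_sum_range]
        have : ∀ i ∈ Finset.range (n - m), c (m + i) = c (i + m) := fun i _ => by rw [add_comm]
        rw [Finset.sum_congr rfl this]
        exact Summable.sum_le_tsum _ (fun i _ => hc _) ((summable_nat_add_iff m).2 hcs)
      · rw [Finset.Ico_eq_empty (by omega)]; simpa using htailnn
    -- main induction
    have main : ∀ n, m ≤ n →
        a n ≤ (∏ i ∈ Finset.Ico m n, (1 - γ i)) * a m + ε₁ + ∑ i ∈ Finset.Ico m n, c i := by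
      intro n hn
      induction n with
      | zero => simp_all; nlinarith [ha 0, hε]
      | succ n ih =>
        rcases Nat.lt_or_ge m (n + 1) with h | h
        · have hmn : m ≤ n := by omega
          have ihn := ih hmn
          have h1 : a (n + 1) ≤ (1 - γ n) * a n + γ n * ε₁ + c n := by
            have := hrec n
            have hδn : δ n ≤ ε₁ := hN₁ n (le_trans (le_max_left _ _) hmn)
            nlinarith [hγ n, this]
          have hP : (0:ℝ) ≤ ∏ i ∈ Finset.Ico m n, (1 - γ i) :=
            Finset.prod_nonneg fun i _ => by linarith [hγ1 i]
          have hPn : ∏ i ∈ Finset.Ico m (n+1), (1 - γ i)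
              = (∏ i ∈ Finset.Ico m n, (1 - γ i)) * (1 - γ n) := by
            rw [Finset.prod_Ico_succ_top hmn]
          have hCn : ∑ i ∈ Finset.Ico m (n+1), c i
              = (∑ i ∈ Finset.Ico m n, c i) + c n := by
            rw [Finset.sum_Ico_succ_top hmn]
          have hCnn : 0 ≤ ∑ i ∈ Finset.Ico m n, c i := Finset.sum_nonneg fun i _ => hc i
          rw [hPn, hCn]
          nlinarith [hγ n, hγ1 n, ha n, ha m, mul_nonneg hP (ha m)]
        · have hme : m = n + 1 := by omega
          rw [hme]
          simp only [Finset.Ico_self, Finset.prod_empty, Finset.sum_empty, one_mul, add_zero]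
          linarith [hε₁]
    -- product tends to zero
    have hdiv2 : Tendsto (fun n => ∑ i ∈ Finset.Ico m n, γ i) atTop atTop := by
      have : ∀ᶠ n in atTop, ∑ i ∈ Finset.Ico m n, γ i
          = (∑ i ∈ Finset.range n, γ i) - ∑ i ∈ Finset.range m, γ i := by
        filter_upwards [eventually_ge_atTop m] with n hn
        rw [Finset.range_eq_Ico,
          ← Finset.sum_Ico_consecutive γ (Nat.zero_le m) hn]
        rw [Finset.range_eq_Ico]; ring
      refine Tendsto.congr' (by filter_upwards [this] with n h using h.symm)
        ((tendsto_atTop_add_const_right _ _ hγdiv))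
    have hPtend : Tendsto (fun n => (∏ i ∈ Finset.Ico m n, (1 - γ i)) * a m) atTop (nhds 0) := by
      have hb : ∀ n, (∏ i ∈ Finset.Ico m n, (1 - γ i)) * a m
          ≤ Real.exp (-(∑ i ∈ Finset.Ico m n, γ i)) * a m := by
        intro n
        have h1 : ∏ i ∈ Finset.Ico m n, (1 - γ i)
            ≤ ∏ i ∈ Finset.Ico m n, Real.exp (-(γ i)) := by
          apply Finset.prod_le_prod (fun i _ => by linarith [hγ1 i])
          intro i _
          nlinarith [Real.add_one_le_exp (-(γ i))]
        have h2 : ∏ i ∈ Finset.Ico m n, Real.exp (-(γ i))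
            = Real.exp (-(∑ i ∈ Finset.Ico m n, γ i)) := by
          rw [← Real.exp_sum, Finset.sum_neg_distrib]
        rw [← h2]
        exact mul_le_mul_of_nonneg_right h1 (ha m)
      have hlb : ∀ n, 0 ≤ (∏ i ∈ Finset.Ico m n, (1 - γ i)) * a m := fun n =>
        mul_nonneg (Finset.prod_nonneg fun i _ => by linarith [hγ1 i]) (ha m)
      have hexp : Tendsto (fun n => Real.exp (-(∑ i ∈ Finset.Ico m n, γ i)) * a m)
          atTop (nhds 0) := by
        have := (Real.tendsto_exp_atBot).comp (tendsto_neg_atTop_atBot.comp hdiv2)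
        simpa using this.mul_const (a m)
      exact squeeze_zero hlb hb hexp
    have := hPtend.eventually (eventually_lt_nhds hε₁)
    filter_upwards [this, eventually_ge_atTop m] with n h1 h2
    calc a n ≤ (∏ i ∈ Finset.Ico m n, (1 - γ i)) * a m + ε₁ + ∑ i ∈ Finset.Ico m n, c i :=
          main n h2
      _ < ε₁ + ε₁ + ε₁ := by
          have := le_trans (hsum_le n) htail_m
          linarith
      _ < ε := by rw [hε₁def]; linarith
  rw [Metric.tendsto_atTop]
  intro ε hε
  obtain ⟨N, hN⟩ := (key ε hε).exists_forall_of_atTop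
  exact ⟨N, fun n hn => by rw [Real.dist_eq, sub_zero, abs_of_nonneg (ha n)]; exact hN n hn⟩

/-- Variant of `exists_ulim` with an absolute-value bound. -/
lemma exists_ulim' (𝒰 : Ultrafilter ℕ) (f : ℕ → ℝ) (M : ℝ) (hf : ∀ n, |f n| ≤ M) :
    ∃ L, |L| ≤ M ∧ Tendsto f (𝒰 : Filter ℕ) (nhds L) := by
  obtain ⟨L, hL, h⟩ := exists_ulim 𝒰 f M hf
  exact ⟨L, abs_le.2 ⟨hL.1, hL.2⟩, h⟩

variable {H : Type*} [NormedAddCommGroup H] [InnerProductSpace ℝ H]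

/-- The key contraction estimate for `x ↦ x - (λμ)•F x`. -/
lemma contraction_step (F : H → H) (κ η : ℝ)
    (hFlip : ∀ x y : H, ‖F x - F y‖ ≤ κ * ‖x - y‖)
    (hFmon : ∀ x y : H, η * ‖x - y‖ ^ 2 ≤ ⟪F x - F y, x - y⟫)
    (μ : ℝ) (hμ0 : 0 < μ) (hθ0 : 0 < μ * (2 * η - μ * κ ^ 2))
    (hθ1 : μ * (2 * η - μ * κ ^ 2) ≤ 1)
    (lam : ℝ) (h0 : 0 ≤ lam) (h1 : lam ≤ 1) (x y : H) :
    ‖(x - (lam * μ) • F x) - (y - (lam * μ) • F y)‖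
      ≤ (1 - lam * (μ * (2 * η - μ * κ ^ 2) / 2)) * ‖x - y‖ := by
  set c := lam * μ with hc
  have hcnn : 0 ≤ c := mul_nonneg h0 hμ0.le
  have hrw : (x - c • F x) - (y - c • F y) = (x - y) - c • (F x - F y) := by
    rw [smul_sub]; abel
  rw [hrw]
  have expand : ‖(x - y) - c • (F x - F y)‖ ^ 2
      = ‖x - y‖ ^ 2 - 2 * c * ⟪F x - F y, x - y⟫ + c ^ 2 * ‖F x - F y‖ ^ 2 := by
    rw [norm_sub_sq_real, real_inner_smul_right, norm_smul, real_inner_comm]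
    simp [abs_of_nonneg hcnn]
    ring
  have hF2 : ‖F x - F y‖ ^ 2 ≤ κ ^ 2 * ‖x - y‖ ^ 2 := by
    have := hFlip x y
    nlinarith [norm_nonneg (F x - F y), norm_nonneg (x - y)]
  have hmono := hFmon x y
  set θ := μ * (2 * η - μ * κ ^ 2) with hθ
  have hτle : lam * (θ / 2) ≤ 1 / 2 := by nlinarith
  have hsq : ‖(x - y) - c • (F x - F y)‖ ^ 2 ≤ ((1 - lam * (θ / 2)) * ‖x - y‖) ^ 2 := by
    rw [mul_pow, expand]
    have h2 : c ^ 2 * ‖F x - F y‖ ^ 2 ≤ c ^ 2 * (κ ^ 2 * ‖x - y‖ ^ 2) := by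
      apply mul_le_mul_of_nonneg_left hF2 (by positivity)
    have h3 : 2 * c * (η * ‖x - y‖ ^ 2) ≤ 2 * c * ⟪F x - F y, x - y⟫ :=
      mul_le_mul_of_nonneg_left hmono (by positivity)
    have hlamsq : lam ^ 2 ≤ lam := by nlinarith
    have hnn : 0 ≤ ‖x - y‖ ^ 2 := by positivity
    have key : 1 - 2 * c * η + c ^ 2 * κ ^ 2 ≤ (1 - lam * (θ / 2)) ^ 2 := by
      have e1 : 1 - 2 * c * η + c ^ 2 * κ ^ 2 ≤ 1 - lam * θ := by
        rw [hc, hθ]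
        have : lam ^ 2 * (μ ^ 2 * κ ^ 2) ≤ lam * (μ ^ 2 * κ ^ 2) := by
          apply mul_le_mul_of_nonneg_right hlamsq (by positivity)
        nlinarith
      nlinarith [sq_nonneg (lam * θ)]
    nlinarith [mul_le_mul_of_nonneg_right key hnn]
  have hfac : 0 ≤ 1 - lam * (θ / 2) := by linarith
  exact le_of_pow_le_pow_left₀ two_ne_zero (mul_nonneg hfac (norm_nonneg (x - y))) hsq

/-- Convexity of the fixed point set of a nonexpansive map on a real Hilbert space. -/
lemma fixedPoints_convex (T : H → H) (hT : ∀ x y : H, ‖T x - T y‖ ≤ ‖x - y‖) :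
    Convex ℝ {x : H | T x = x} := by
  intro x hx y hy a b ha hb hab
  simp only [Set.mem_setOf_eq] at hx hy ⊢
  rcases eq_or_ne x y with rfl | hxy
  · have : a • x + b • x = x := by rw [← add_smul, hab, one_smul]
    rw [this, hx]
  set z := a • x + b • y with hz
  have ha' : a = 1 - b := by linarith
  have hb'' : b = 1 - a := by linarith
  have hzx : z - x = b • (y - x) := by rw [hz, ha']; module
  have hzy : z - y = a • (x - y) := by rw [hz, hb'']; module
  have h1 : ‖T z - x‖ ≤ b * ‖y - x‖ := by
    calc ‖T z - x‖ = ‖T z - T x‖ := by rw [hx]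
      _ ≤ ‖z - x‖ := hT z x
      _ = b * ‖y - x‖ := by rw [hzx, norm_smul, Real.norm_eq_abs, abs_of_nonneg hb]
  have h2 : ‖T z - y‖ ≤ a * ‖x - y‖ := by
    calc ‖T z - y‖ = ‖T z - T y‖ := by rw [hy]
      _ ≤ ‖z - y‖ := hT z y
      _ = a * ‖x - y‖ := by rw [hzy, norm_smul, Real.norm_eq_abs, abs_of_nonneg ha]
  have hxy' : ‖x - y‖ = ‖y - x‖ := norm_sub_rev x y
  have htri : ‖x - y‖ ≤ ‖x - T z‖ + ‖T z - y‖ := norm_sub_le_norm_sub_add_norm_sub x (T z) y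
  have hxTz : ‖x - T z‖ = ‖T z - x‖ := norm_sub_rev x (T z)
  have hcomb : b * ‖y - x‖ + a * ‖x - y‖ = ‖x - y‖ := by
    rw [← hxy']
    calc b * ‖x - y‖ + a * ‖x - y‖ = (a + b) * ‖x - y‖ := by ring
      _ = ‖x - y‖ := by rw [hab, one_mul]
  have heq1 : ‖T z - x‖ = b * ‖y - x‖ := by
    by_contra hne
    have : ‖T z - x‖ < b * ‖y - x‖ := lt_of_le_of_ne h1 hne
    linarith
  have heq2 : ‖T z - y‖ = a * ‖x - y‖ := by
    by_contra hne
    have : ‖T z - y‖ < a * ‖x - y‖ := lt_of_le_of_ne h2 hne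
    linarith
  have hadd : ‖(x - T z) + (T z - y)‖ = ‖x - T z‖ + ‖T z - y‖ := by
    have : (x - T z) + (T z - y) = x - y := by abel
    rw [this, hxTz, heq1, heq2]
    linarith [hcomb, hxy']
  have hray : SameRay ℝ (x - T z) (T z - y) := sameRay_iff_norm_add.2 hadd
  obtain ⟨r, s, hr, hs, hrs, hv1, _⟩ := hray.exists_eq_smul_add
  have hsum : (x - T z) + (T z - y) = x - y := by abel
  rw [hsum] at hv1
  -- ‖x - T z‖ = r * ‖x - y‖ and also = b * ‖x - y‖
  have hnorm1 : ‖x - T z‖ = r * ‖x - y‖ := by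
    rw [hv1, norm_smul, Real.norm_eq_abs, abs_of_nonneg hr]
  have hxyne : ‖x - y‖ ≠ 0 := fun h => hxy (by rwa [← sub_eq_zero, ← norm_eq_zero])
  have hrb : r = b := by
    have : r * ‖x - y‖ = b * ‖x - y‖ := by
      rw [← hnorm1, hxTz, heq1, hxy']
    exact mul_right_cancel₀ hxyne this
  have : x - T z = b • (x - y) := by rw [hv1, hrb]
  have : T z = z := by
    have hb' : T z = x - b • (x - y) := by
      rw [← this]; abel
    rw [hb', hz, ha']; module
  exact this

variable [CompleteSpace H]

/-- Existence of the metric projection onto a nonempty closed convex set,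
with its variational characterization. -/
lemma exists_proj (S : Set H) (hSc : IsClosed S) (hconv : Convex ℝ S) (hne : S.Nonempty)
    (x : H) : ∃ p ∈ S, ∀ w ∈ S, ⟪x - p, w - p⟫ ≤ 0 := by
  obtain ⟨p, hp, hnorm⟩ := exists_norm_eq_iInf_of_complete_convex hne hSc.isComplete hconv x
  exact ⟨p, hp, (norm_eq_iInf_iff_real_inner_le_zero hconv hp).1 hnorm⟩

/-- Existence of a solution of the variational inequality for a Lipschitz strongly
monotone operator over a nonempty closed convex set. -/
lemma exists_vip (S : Set H) (hSc : IsClosed S) (hconv : Convex ℝ S) (hne : S.Nonempty)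
    (F : H → H) (κ η : ℝ)
    (hFlip : ∀ x y : H, ‖F x - F y‖ ≤ κ * ‖x - y‖)
    (hFmon : ∀ x y : H, η * ‖x - y‖ ^ 2 ≤ ⟪F x - F y, x - y⟫)
    (μ : ℝ) (hμ0 : 0 < μ) (hθ0 : 0 < μ * (2 * η - μ * κ ^ 2))
    (hθ1 : μ * (2 * η - μ * κ ^ 2) ≤ 1) :
    ∃ p ∈ S, ∀ v ∈ S, 0 ≤ ⟪v - p, F p⟫ := by
  classical
  set P : H → H := fun x => Classical.choose (exists_proj S hSc hconv hne x) with hP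
  have hPmem : ∀ x, P x ∈ S := fun x => (Classical.choose_spec (exists_proj S hSc hconv hne x)).1
  have hPchar : ∀ x, ∀ w ∈ S, ⟪x - P x, w - P x⟫ ≤ 0 := fun x =>
    (Classical.choose_spec (exists_proj S hSc hconv hne x)).2
  have hPnonexp : ∀ x y, ‖P x - P y‖ ≤ ‖x - y‖ := by
    intro x y
    have h1 := hPchar x (P y) (hPmem y)
    have h2 := hPchar y (P x) (hPmem x)
    have key : ‖P x - P y‖ ^ 2 ≤ ⟪x - y, P x - P y⟫ := by
      have e1 : ⟪x - P x, P y - P x⟫ ≤ 0 := h1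
      have e2 : ⟪y - P y, P x - P y⟫ ≤ 0 := h2
      have d1 : ⟪x - P x, P x - P y⟫ = -⟪x - P x, P y - P x⟫ := by
        rw [← inner_neg_right]; congr 1; abel
      have d2 : ⟪P y - y, P x - P y⟫ = -⟪y - P y, P x - P y⟫ := by
        rw [← inner_neg_left]; congr 1; abel
      have split : ⟪x - y, P x - P y⟫
          = ⟪x - P x, P x - P y⟫ + ⟪P x - P y, P x - P y⟫ + ⟪P y - y, P x - P y⟫ := by
        rw [← inner_add_left, ← inner_add_left]; congr 1; abel
      rw [split, real_inner_self_eq_norm_sq, d1, d2]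
      linarith
    nlinarith [norm_nonneg (P x - P y), norm_nonneg (x - y),
      real_inner_le_norm (x - y) (P x - P y)]
  -- Banach fixed point for Φ = P ∘ (I - μ F)
  set τ := μ * (2 * η - μ * κ ^ 2) / 2 with hτ
  have hτpos : 0 < τ := by positivity
  have hτ1 : τ ≤ 1 / 2 := by rw [hτ]; linarith
  set Φ : H → H := fun x => P (x - μ • F x) with hΦ
  have hΦlip : ∀ x y, dist (Φ x) (Φ y) ≤ (1 - τ) * dist x y := by
    intro x y
    rw [dist_eq_norm, dist_eq_norm]
    calc ‖Φ x - Φ y‖ ≤ ‖(x - μ • F x) - (y - μ • F y)‖ := hPnonexp _ _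
      _ ≤ (1 - 1 * τ) * ‖x - y‖ := by
          have := contraction_step F κ η hFlip hFmon μ hμ0 hθ0 hθ1 1 zero_le_one le_rfl x y
          simpa [hτ] using this
      _ = (1 - τ) * ‖x - y‖ := by ring
  have hK : (⟨1 - τ, by linarith⟩ : NNReal) < 1 := by
    exact NNReal.coe_lt_coe.1 (show (1 - τ : ℝ) < 1 by linarith)
  have hΦc : ContractingWith ⟨1 - τ, by linarith⟩ Φ :=
    ⟨hK, LipschitzWith.of_dist_le_mul fun x y => by exact hΦlip x y⟩
  obtain ⟨p, hfix, -⟩ := hΦc.exists_fixedPoint 0 (edist_ne_top _ _)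
  have hfixeq : P (p - μ • F p) = p := hfix
  have hpS : p ∈ S := hfixeq ▸ hPmem _
  refine ⟨p, hpS, ?_⟩
  intro v hv
  have hchar := hPchar (p - μ • F p) v hv
  rw [hfixeq] at hchar
  have hrw2 : ⟪p - μ • F p - p, v - p⟫ = -μ * ⟪F p, v - p⟫ := by
    rw [show p - μ • F p - p = -(μ • F p) by abel, inner_neg_left, real_inner_smul_left]
    ring
  rw [hrw2] at hchar
  rw [real_inner_comm]
  nlinarith

end AuxLemmas

set_option maxHeartbeats 2000000 in
/-- Yamada's theorem (finite family of nonexpansive mappings): the hybrid steepest descent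
method converges strongly to the unique solution of VIP(F, ⋂ Fix Tᵢ). -/
theorem hsdm_family_convergence
    {H : Type*} [NormedAddCommGroup H] [InnerProductSpace ℝ H] [CompleteSpace H]
    (N : ℕ) (hN : 1 ≤ N) (T : ℕ → H → H)
    (hT : ∀ i ∈ Finset.Icc 1 N, ∀ x y : H, ‖T i x - T i y‖ ≤ ‖x - y‖)
    (S : Set H) (hSdef : S = ⋂ i ∈ Finset.Icc 1 N, {x : H | T i x = x})
    (hS : S.Nonempty)
    (hBauschke : ∀ k < N, S = {x : H | cycComp T N k x = x})
    (κ η : ℝ) (hκ : 0 < κ) (hη : 0 < η)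
    (F : H → H)
    (hFlip : ∀ x y : H, ‖F x - F y‖ ≤ κ * ‖x - y‖)
    (hFmon : ∀ x y : H, η * ‖x - y‖ ^ 2 ≤ ⟪F x - F y, x - y⟫)
    (μ : ℝ) (hμ : μ ∈ Set.Ioo (0 : ℝ) (2 * η / κ ^ 2))
    (lam : ℕ → ℝ) (hlam : ∀ n, lam n ∈ Set.Ioc (0 : ℝ) 1)
    (hlam0 : Filter.Tendsto lam Filter.atTop (nhds 0))
    (hdiv : Filter.Tendsto (fun n => ∑ i ∈ Finset.Icc 1 n, lam i) Filter.atTop Filter.atTop)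
    (hsum : Summable (fun n => |lam n - lam (n + N)|))
    (u₀ : H) (u : ℕ → H) (hu0 : u 0 = u₀)
    (hrec : ∀ n, u (n + 1) =
      T (cyc N (n + 1)) (u n) - (lam (n + 1) * μ) • F (T (cyc N (n + 1)) (u n))) :
    ∃ ustar : H,
      (ustar ∈ S ∧ ∀ v ∈ S, 0 ≤ ⟪v - ustar, F ustar⟫) ∧
      (∀ w ∈ S, (∀ v ∈ S, 0 ≤ ⟪v - w, F w⟫) → w = ustar) ∧
      Filter.Tendsto u Filter.atTop (nhds ustar) := by
  classical
  rcases subsingleton_or_nontrivial H with hsub | hnt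
  · obtain ⟨p, hp⟩ := hS
    refine ⟨p, ⟨hp, fun v _ => ?_⟩, fun w _ _ => Subsingleton.elim w p, ?_⟩
    · rw [Subsingleton.elim (v - p) 0, inner_zero_left]
    · have : u = fun _ => p := funext fun n => Subsingleton.elim _ _
      rw [this]; exact tendsto_const_nhds
  -- basic constants
  have hμ0 : 0 < μ := hμ.1
  obtain ⟨x0, y0, hxy0⟩ := exists_pair_ne H
  have hd0 : (0:ℝ) < ‖x0 - y0‖ := by
    rw [norm_pos_iff, sub_ne_zero]; exact hxy0
  have hηκ : η ≤ κ := by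
    have h1 := hFmon x0 y0
    have h2 := hFlip x0 y0
    have h3 := real_inner_le_norm (F x0 - F y0) (x0 - y0)
    have h4 : ‖F x0 - F y0‖ * ‖x0 - y0‖ ≤ (κ * ‖x0 - y0‖) * ‖x0 - y0‖ :=
      mul_le_mul_of_nonneg_right h2 (norm_nonneg _)
    have h5 : (0:ℝ) < ‖x0 - y0‖ ^ 2 := by positivity
    nlinarith
  have hθ0 : 0 < μ * (2 * η - μ * κ ^ 2) := by
    have h2 : μ * κ ^ 2 < 2 * η := by
      have := hμ.2
      rw [lt_div_iff₀ (by positivity)] at this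
      linarith
    exact mul_pos hμ0 (by linarith)
  have hθ1 : μ * (2 * η - μ * κ ^ 2) ≤ 1 := by
    have e1 : μ * (2 * η - μ * κ ^ 2) * κ ^ 2 = η ^ 2 - (η - μ * κ ^ 2) ^ 2 := by ring
    have e2 : η ^ 2 ≤ κ ^ 2 := by nlinarith
    nlinarith [sq_nonneg (η - μ * κ ^ 2), mul_pos hκ hκ]
  set τ : ℝ := μ * (2 * η - μ * κ ^ 2) / 2 with hτdef
  have hτ0 : 0 < τ := by positivity
  have hτ1 : τ ≤ 1 / 2 := by rw [hτdef]; linarith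
  have hcon : ∀ (l : ℝ), 0 ≤ l → l ≤ 1 → ∀ x y : H,
      ‖(x - (l * μ) • F x) - (y - (l * μ) • F y)‖ ≤ (1 - l * τ) * ‖x - y‖ :=
    fun l h0 h1 x y => contraction_step F κ η hFlip hFmon μ hμ0 hθ0 hθ1 l h0 h1 x y
  -- closedness and convexity of S
  have hTcont : ∀ i ∈ Finset.Icc 1 N, Continuous (T i) := by
    intro i hi
    have : LipschitzWith 1 (T i) := by
      apply LipschitzWith.of_dist_le_mul
      intro x y
      rw [dist_eq_norm, dist_eq_norm, NNReal.coe_one, one_mul]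
      exact hT i hi x y
    exact this.continuous
  have hSclosed : IsClosed S := by
    rw [hSdef]
    refine isClosed_biInter fun i hi => ?_
    have : {x : H | T i x = x} = (fun x => T i x - x) ⁻¹' {0} := by
      ext x; simp [sub_eq_zero]
    rw [this]
    exact IsClosed.preimage ((hTcont i hi).sub continuous_id) isClosed_singleton
  have hSconv : Convex ℝ S := by
    rw [hSdef]
    exact convex_iInter₂ fun i hi => fixedPoints_convex (T i) (hT i hi)
  obtain ⟨p, hpS, hpVIP⟩ := exists_vip S hSclosed hSconv hS F κ η hFlip hFmon μ hμ0 hθ0 hθ1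
  have huniq : ∀ w ∈ S, (∀ v ∈ S, 0 ≤ ⟪v - w, F w⟫) → w = p := by
    intro w hw hwVIP
    have h1 := hwVIP p hpS
    have h2 := hpVIP w hw
    have h3 := hFmon w p
    have c1 : ⟪p - w, F w⟫ = -⟪F w, w - p⟫ := by
      rw [show p - w = -(w - p) by abel, inner_neg_left, real_inner_comm]
    have c2 : ⟪w - p, F p⟫ = ⟪F p, w - p⟫ := by rw [real_inner_comm]
    have h4 : ⟪F w - F p, w - p⟫ = -⟪p - w, F w⟫ - ⟪w - p, F p⟫ := by
      rw [inner_sub_left, c1, c2]; ring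
    have h5 : ‖w - p‖ ^ 2 ≤ 0 := by nlinarith
    have : ‖w - p‖ = 0 := by nlinarith [norm_nonneg (w - p)]
    rwa [norm_eq_zero, sub_eq_zero] at this
  refine ⟨p, ⟨hpS, hpVIP⟩, huniq, ?_⟩
  -- convergence
  have hNpos : 0 < N := hN
  have hcycmem : ∀ m, cyc N m ∈ Finset.Icc 1 N := by
    intro m
    have := Nat.mod_lt m hNpos
    unfold cyc
    split <;> (rw [Finset.mem_Icc]; omega)
  have hTfix : ∀ i ∈ Finset.Icc 1 N, T i p = p := by
    intro i hi
    have h := hSdef ▸ hpS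
    exact Set.mem_iInter₂.1 h i hi
  have hTn : ∀ m (x y : H), ‖T (cyc N m) x - T (cyc N m) y‖ ≤ ‖x - y‖ :=
    fun m => hT _ (hcycmem m)
  have hTnfix : ∀ m, T (cyc N m) p = p := fun m => hTfix _ (hcycmem m)
  have hlam0' : ∀ n, 0 < lam n := fun n => (hlam n).1
  have hlam1 : ∀ n, lam n ≤ 1 := fun n => (hlam n).2
  have hfac : ∀ n, 0 ≤ 1 - lam (n + 1) * τ := by
    intro n
    nlinarith [hlam1 (n+1), (hlam0' (n+1)).le, hτ1, hτ0]
  have hγ1 : ∀ n, lam (n + 1) * τ ≤ 1 := fun n => by linarith [hfac n]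
  have hstep : ∀ n (x y : H),
      ‖(x - (lam (n + 1) * μ) • F x) - (y - (lam (n + 1) * μ) • F y)‖
        ≤ (1 - lam (n + 1) * τ) * ‖x - y‖ :=
    fun n x y => hcon _ (hlam0' _).le (hlam1 _) x y
  have hid : ∀ n, u (n + 1) - p
      = ((T (cyc N (n + 1)) (u n) - (lam (n + 1) * μ) • F (T (cyc N (n + 1)) (u n)))
          - (p - (lam (n + 1) * μ) • F p)) - (lam (n + 1) * μ) • F p := by
    intro n; rw [hrec n]; abel
  have hTp : ∀ n (x : H), ‖T (cyc N (n + 1)) x - p‖ ≤ ‖x - p‖ := by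
    intro n x
    calc ‖T (cyc N (n + 1)) x - p‖ = ‖T (cyc N (n + 1)) x - T (cyc N (n + 1)) p‖ := by
          rw [hTnfix]
      _ ≤ ‖x - p‖ := hTn _ _ _
  set R : ℝ := max ‖u 0 - p‖ (μ * ‖F p‖ / τ) with hRdef
  have hR1 : μ * ‖F p‖ / τ ≤ R := le_max_right _ _
  have hRnn : 0 ≤ R := le_trans (norm_nonneg _) (le_max_left _ _)
  have hbound : ∀ n, ‖u n - p‖ ≤ R := by
    intro n
    induction n with
    | zero => exact le_max_left _ _
    | succ n ih =>
      have h1 : ‖u (n + 1) - p‖ ≤ (1 - lam (n + 1) * τ) * ‖T (cyc N (n + 1)) (u n) - p‖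
          + lam (n + 1) * μ * ‖F p‖ := by
        rw [hid n]
        refine le_trans (norm_sub_le _ _) (add_le_add (hstep n _ p) ?_)
        rw [norm_smul, Real.norm_eq_abs, abs_of_nonneg (mul_nonneg (hlam0' (n+1)).le hμ0.le)]
      have h2 := hTp n (u n)
      have h4 : lam (n + 1) * μ * ‖F p‖ = (lam (n + 1) * τ) * (μ * ‖F p‖ / τ) := by
        field_simp
      have h6 : 0 < lam (n + 1) * τ := mul_pos (hlam0' _) hτ0
      calc ‖u (n + 1) - p‖
          ≤ (1 - lam (n + 1) * τ) * ‖u n - p‖ + (lam (n + 1) * τ) * (μ * ‖F p‖ / τ) := by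
            rw [← h4]
            refine le_trans h1 (add_le_add ?_ le_rfl)
            exact mul_le_mul_of_nonneg_left (le_trans h2 le_rfl) (hfac n)
        _ ≤ (1 - lam (n + 1) * τ) * R + (lam (n + 1) * τ) * R :=
            add_le_add (mul_le_mul_of_nonneg_left (le_trans ih le_rfl) (hfac n))
              (mul_le_mul_of_nonneg_left hR1 h6.le)
        _ = R := by ring
  set M₁ : ℝ := ‖F p‖ + κ * R with hM₁def
  have hM1 : ∀ n, ‖F (T (cyc N (n + 1)) (u n))‖ ≤ M₁ := by
    intro n
    have h2 : ‖T (cyc N (n + 1)) (u n) - p‖ ≤ R := le_trans (hTp n (u n)) (hbound n)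
    have h3 := hFlip (T (cyc N (n + 1)) (u n)) p
    have h4 : κ * ‖T (cyc N (n + 1)) (u n) - p‖ ≤ κ * R := mul_le_mul_of_nonneg_left h2 hκ.le
    calc ‖F (T (cyc N (n + 1)) (u n))‖
        = ‖F p + (F (T (cyc N (n + 1)) (u n)) - F p)‖ := by congr 1; abel
      _ ≤ ‖F p‖ + ‖F (T (cyc N (n + 1)) (u n)) - F p‖ := norm_add_le _ _
      _ ≤ M₁ := by rw [hM₁def]; linarith
  have hM1nn : 0 ≤ M₁ := le_trans (norm_nonneg _) (hM1 0)
  -- the difference sequence d n = ‖u (n + N) - u n‖ tends to 0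
  have hshiftc : ∀ n, cyc N (n + N + 1) = cyc N (n + 1) := by
    intro n
    have h1 : (n + N + 1) % N = (n + 1) % N := by
      rw [show n + N + 1 = n + 1 + N by omega, Nat.add_mod_right]
    unfold cyc; rw [h1]
  set d : ℕ → ℝ := fun n => ‖u (n + N) - u n‖ with hddef
  set cc : ℕ → ℝ := fun n => μ * M₁ * |lam (n + 1 + N) - lam (n + 1)| with hccdef
  have hdrec : ∀ n, d (n + 1) ≤ (1 - lam (n + 1) * τ) * d n + cc n := by
    intro n
    have e0 : n + 1 + N = n + N + 1 := by omega
    have e1 : u (n + N + 1) - u (n + 1)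
        = ((T (cyc N (n + 1)) (u (n + N)) - (lam (n + 1) * μ) • F (T (cyc N (n + 1)) (u (n + N))))
            - (T (cyc N (n + 1)) (u n) - (lam (n + 1) * μ) • F (T (cyc N (n + 1)) (u n))))
          - ((lam (n + N + 1) - lam (n + 1)) * μ) • F (T (cyc N (n + 1)) (u (n + N))) := by
      rw [hrec (n + N), hrec n, hshiftc n]
      module
    have hb := hM1 (n + N)
    rw [hshiftc n] at hb
    have e2 : ‖u (n + N + 1) - u (n + 1)‖
        ≤ (1 - lam (n + 1) * τ) * ‖u (n + N) - u n‖ + μ * M₁ * |lam (n + 1 + N) - lam (n + 1)| := by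
      rw [e1]
      refine le_trans (norm_sub_le _ _) (add_le_add ?_ ?_)
      · exact le_trans (hstep n _ _) (mul_le_mul_of_nonneg_left (hTn _ _ _) (hfac n))
      · rw [norm_smul, Real.norm_eq_abs]
        have habs : |(lam (n + N + 1) - lam (n + 1)) * μ| = μ * |lam (n + 1 + N) - lam (n + 1)| := by
          rw [abs_mul, abs_of_nonneg hμ0.le, e0]; ring
        rw [habs]
        have hnn : 0 ≤ μ * |lam (n + 1 + N) - lam (n + 1)| := by positivity
        calc μ * |lam (n + 1 + N) - lam (n + 1)| * ‖F (T (cyc N (n + 1)) (u (n + N)))‖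
            ≤ μ * |lam (n + 1 + N) - lam (n + 1)| * M₁ := mul_le_mul_of_nonneg_left hb hnn
          _ = μ * M₁ * |lam (n + 1 + N) - lam (n + 1)| := by ring
    calc d (n + 1) = ‖u (n + N + 1) - u (n + 1)‖ := by rw [hddef]; simp only []; rw [e0]
      _ ≤ _ := e2
  have hsumshift : ∀ (f : ℕ → ℝ) (n : ℕ),
      ∑ i ∈ Finset.range n, f (i + 1) = ∑ i ∈ Finset.Icc 1 n, f i := by
    intro f n
    induction n with
    | zero => simp
    | succ n ih => rw [Finset.sum_range_succ, ih, Finset.sum_Icc_succ_top (by omega)]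
  have hγdiv : Tendsto (fun n => ∑ i ∈ Finset.range n, lam (i + 1) * τ) atTop atTop := by
    have h1 : ∀ n, ∑ i ∈ Finset.range n, lam (i + 1) * τ = τ * ∑ i ∈ Finset.Icc 1 n, lam i := by
      intro n
      rw [← hsumshift lam n, Finset.mul_sum]
      exact Finset.sum_congr rfl fun i _ => by ring
    exact Tendsto.congr (fun n => (h1 n).symm) (hdiv.const_mul_atTop' hτ0)
  have hcs : Summable cc := by
    have h1 : Summable (fun n => |lam (n + 1) - lam (n + 1 + N)|) := by
      have h2 := (summable_nat_add_iff 1).2 hsum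
      exact h2.congr fun n => by norm_num
    have h3 : Summable (fun n => |lam (n + 1 + N) - lam (n + 1)|) :=
      h1.congr fun n => abs_sub_comm _ _
    exact (h3.mul_left (μ * M₁)).congr fun n => by rw [hccdef]
  have hd0 : Tendsto d atTop (nhds 0) := by
    refine xu_lemma d (fun n => lam (n + 1) * τ) (fun _ => 0) cc (fun n => norm_nonneg _)
      (fun n => (mul_pos (hlam0' _) hτ0).le) hγ1 hγdiv
      (fun ε hε => Eventually.of_forall fun n => hε.le)
      (fun n => mul_nonneg (mul_nonneg hμ0.le hM1nn) (abs_nonneg _)) hcs (fun n => by simpa using hdrec n)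
  -- u is asymptotically fixed by the cyclic compositions
  have hstep4 : ∀ n, ‖u (n + 1) - T (cyc N (n + 1)) (u n)‖ ≤ lam (n + 1) * (μ * M₁) := by
    intro n
    rw [hrec n, show T (cyc N (n + 1)) (u n) - (lam (n + 1) * μ) • F (T (cyc N (n + 1)) (u n))
      - T (cyc N (n + 1)) (u n) = -((lam (n + 1) * μ) • F (T (cyc N (n + 1)) (u n))) by abel,
      norm_neg, norm_smul, Real.norm_eq_abs, abs_of_nonneg (mul_nonneg (hlam0' (n+1)).le hμ0.le)]
    calc lam (n + 1) * μ * ‖F (T (cyc N (n + 1)) (u n))‖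
        ≤ lam (n + 1) * μ * M₁ := mul_le_mul_of_nonneg_left (hM1 n)
          (mul_nonneg (hlam0' (n+1)).le hμ0.le)
      _ = lam (n + 1) * (μ * M₁) := by ring
  set Pc : ℕ → ℕ → H → H :=
    fun k j x => (List.range j).foldl (fun y i => T (cyc N (i + 1 + k)) y) x with hPcdef
  have hPcsucc : ∀ k j x, Pc k (j + 1) x = T (cyc N (j + 1 + k)) (Pc k j x) := by
    intro k j x
    simp only [hPcdef, List.range_succ, List.foldl_append, List.foldl_cons, List.foldl_nil]
  have hPcnon : ∀ k j (x y : H), ‖Pc k j x - Pc k j y‖ ≤ ‖x - y‖ := by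
    intro k j
    induction j with
    | zero => intro x y; exact le_rfl
    | succ j ih =>
      intro x y
      rw [hPcsucc, hPcsucc]
      exact le_trans (hT _ (hcycmem _) _ _) (ih x y)
  have hPcbound : ∀ n j, ‖u (n + j) - Pc n j (u n)‖ ≤ μ * M₁ * ∑ i ∈ Finset.Icc 1 j, lam (n + i) := by
    intro n j
    induction j with
    | zero => simp [hPcdef]
    | succ j ih =>
      have harg : n + j + 1 = j + 1 + n := by omega
      have h1 : ‖u (n + (j + 1)) - Pc n (j + 1) (u n)‖
          ≤ ‖u (n + j + 1) - T (cyc N (n + j + 1)) (u (n + j))‖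
            + ‖T (cyc N (n + j + 1)) (u (n + j)) - T (cyc N (j + 1 + n)) (Pc n j (u n))‖ := by
        rw [hPcsucc, show n + (j + 1) = n + j + 1 from rfl]
        exact norm_sub_le_norm_sub_add_norm_sub _ _ _
      have h2 : ‖T (cyc N (n + j + 1)) (u (n + j)) - T (cyc N (j + 1 + n)) (Pc n j (u n))‖
          ≤ ‖u (n + j) - Pc n j (u n)‖ := by
        rw [harg]
        exact hT _ (hcycmem _) _ _
      have h3 := hstep4 (n + j)
      have h4 : ∑ i ∈ Finset.Icc 1 (j + 1), lam (n + i)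
          = (∑ i ∈ Finset.Icc 1 j, lam (n + i)) + lam (n + j + 1) := by
        rw [Finset.sum_Icc_succ_top (by omega)]
        rfl
      rw [h4]
      have h6 : μ * M₁ * ((∑ i ∈ Finset.Icc 1 j, lam (n + i)) + lam (n + j + 1))
          = μ * M₁ * (∑ i ∈ Finset.Icc 1 j, lam (n + i)) + lam (n + j + 1) * (μ * M₁) := by
        ring
      linarith [h1, h2, h3, ih, h6]
  have htendS : Tendsto (fun n => ∑ i ∈ Finset.Icc 1 N, lam (n + i)) atTop (nhds 0) := by
    have h1 : ∀ i : ℕ, Tendsto (fun n => lam (n + i)) atTop (nhds 0) :=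
      fun i => hlam0.comp (tendsto_add_atTop_nat i)
    have h2 := tendsto_finset_sum (Finset.Icc 1 N) (fun i (_ : i ∈ Finset.Icc 1 N) => h1 i)
    simpa using h2
  have hE0 : Tendsto (fun n => ‖u n - cycComp T N n (u n)‖) atTop (nhds 0) := by
    have hb : ∀ n, ‖u n - cycComp T N n (u n)‖
        ≤ d n + μ * M₁ * ∑ i ∈ Finset.Icc 1 N, lam (n + i) := by
      intro n
      have h1 : ‖u n - cycComp T N n (u n)‖
          ≤ ‖u n - u (n + N)‖ + ‖u (n + N) - cycComp T N n (u n)‖ :=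
        norm_sub_le_norm_sub_add_norm_sub _ _ _
      have h2 : ‖u n - u (n + N)‖ = d n := norm_sub_rev _ _
      have h3 : ‖u (n + N) - cycComp T N n (u n)‖
          ≤ μ * M₁ * ∑ i ∈ Finset.Icc 1 N, lam (n + i) := hPcbound n N
      linarith
    have hlim : Tendsto (fun n => d n + μ * M₁ * ∑ i ∈ Finset.Icc 1 N, lam (n + i))
        atTop (nhds 0) := by
      have := hd0.add (htendS.const_mul (μ * M₁))
      simpa using this
    exact squeeze_zero (fun n => norm_nonneg _) hb hlim
  -- key: along any ultrafilter finer than atTop the VIP functional has nonpositive limit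
  have hB : ∀ n, ‖u n‖ ≤ ‖p‖ + R := by
    intro n
    calc ‖u n‖ = ‖p + (u n - p)‖ := by congr 1; abel
      _ ≤ ‖p‖ + ‖u n - p‖ := norm_add_le _ _
      _ ≤ ‖p‖ + R := by linarith [hbound n]
  have hkey : ∀ 𝒰 : Ultrafilter ℕ, (𝒰 : Filter ℕ) ≤ atTop →
      ∃ L ≤ 0, Tendsto (fun n => ⟪F p, p - u n⟫) (𝒰 : Filter ℕ) (nhds L) := by
    intro 𝒰 h𝒰
    set B : ℝ := ‖p‖ + R with hBdef
    have hinner : ∀ y : H, ∀ n, |⟪u n, y⟫| ≤ B * ‖y‖ := by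
      intro y n
      calc |⟪u n, y⟫| ≤ ‖u n‖ * ‖y‖ := abs_real_inner_le_norm _ _
        _ ≤ B * ‖y‖ := mul_le_mul_of_nonneg_right (hB n) (norm_nonneg _)
    have hulim : ∀ y : H, ∃ L, |L| ≤ B * ‖y‖ ∧
        Tendsto (fun n => ⟪u n, y⟫) (𝒰 : Filter ℕ) (nhds L) :=
      fun y => exists_ulim' 𝒰 _ _ (hinner y)
    set g0 : H → ℝ := fun y => Classical.choose (hulim y) with hg0def
    have hg0 : ∀ y, |g0 y| ≤ B * ‖y‖ ∧
        Tendsto (fun n => ⟪u n, y⟫) (𝒰 : Filter ℕ) (nhds (g0 y)) :=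
      fun y => Classical.choose_spec (hulim y)
    have hadd : ∀ y y', g0 (y + y') = g0 y + g0 y' := by
      intro y y'
      refine tendsto_nhds_unique (hg0 (y + y')).2 ?_
      have h1 := (hg0 y).2.add (hg0 y').2
      simpa [inner_add_right] using h1
    have hsmul : ∀ (r : ℝ) (y : H), g0 (r • y) = r * g0 y := by
      intro r y
      refine tendsto_nhds_unique (hg0 (r • y)).2 ?_
      have h1 := (hg0 y).2.const_mul r
      simpa [real_inner_smul_right] using h1
    set gl : H →ₗ[ℝ] ℝ :=
      { toFun := g0, map_add' := hadd, map_smul' := fun r y => by simpa using hsmul r y }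
      with hgldef
    set g : H →L[ℝ] ℝ := LinearMap.mkContinuous gl B
      (fun y => by rw [Real.norm_eq_abs]; exact (hg0 y).1) with hgdef
    set z : H := (InnerProductSpace.toDual ℝ H).symm g with hzdef
    have hz : ∀ y, ⟪z, y⟫ = g0 y := fun y => InnerProductSpace.toDual_symm_apply
    have hweak : ∀ y : H, Tendsto (fun n => ⟪u n - z, y⟫) (𝒰 : Filter ℕ) (nhds 0) := by
      intro y
      have h1 := (hg0 y).2.sub (tendsto_const_nhds (x := ⟪z, y⟫))
      rw [hz y, sub_self] at h1
      refine h1.congr fun n => ?_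
      rw [inner_sub_left, hz y]
    -- asymptotic radius function
    have hρex : ∀ w : H, ∃ L, 0 ≤ L ∧
        Tendsto (fun n => ‖u n - w‖) (𝒰 : Filter ℕ) (nhds L) := by
      intro w
      have hb : ∀ n, |‖u n - w‖| ≤ R + ‖p - w‖ := by
        intro n
        rw [abs_of_nonneg (norm_nonneg _)]
        calc ‖u n - w‖ = ‖(u n - p) + (p - w)‖ := by congr 1; abel
          _ ≤ ‖u n - p‖ + ‖p - w‖ := norm_add_le _ _
          _ ≤ R + ‖p - w‖ := by linarith [hbound n]
      obtain ⟨L, _, hL⟩ := exists_ulim' 𝒰 _ _ hb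
      exact ⟨L, ge_of_tendsto hL (Eventually.of_forall fun n => norm_nonneg _), hL⟩
    set ρ : H → ℝ := fun w => Classical.choose (hρex w) with hρdef
    have hρ : ∀ w, 0 ≤ ρ w ∧ Tendsto (fun n => ‖u n - w‖) (𝒰 : Filter ℕ) (nhds (ρ w)) :=
      fun w => Classical.choose_spec (hρex w)
    have hρsq : ∀ w, Tendsto (fun n => ‖u n - w‖ ^ 2) (𝒰 : Filter ℕ) (nhds ((ρ w) ^ 2)) := by
      intro w
      have := (hρ w).2.mul (hρ w).2
      simpa [sq] using this
    have hident : ∀ w, (ρ w) ^ 2 = (ρ z) ^ 2 + ‖z - w‖ ^ 2 := by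
      intro w
      have hexp : ∀ n, ‖u n - w‖ ^ 2
          = ‖u n - z‖ ^ 2 + 2 * ⟪u n - z, z - w⟫ + ‖z - w‖ ^ 2 := by
        intro n
        rw [show u n - w = (u n - z) + (z - w) by abel, norm_add_sq_real]
      have h2 : Tendsto (fun n => ‖u n - z‖ ^ 2 + 2 * ⟪u n - z, z - w⟫ + ‖z - w‖ ^ 2)
          (𝒰 : Filter ℕ) (nhds ((ρ z) ^ 2 + 2 * 0 + ‖z - w‖ ^ 2)) :=
        ((hρsq z).add ((hweak (z - w)).const_mul 2)).add tendsto_const_nhds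
      have h3 : Tendsto (fun n => ‖u n - w‖ ^ 2) (𝒰 : Filter ℕ)
          (nhds ((ρ z) ^ 2 + 2 * 0 + ‖z - w‖ ^ 2)) := h2.congr fun n => (hexp n).symm
      have h4 := tendsto_nhds_unique (hρsq w) h3
      rw [h4]; ring
    -- choose the residue class of the ultrafilter
    have hpart : (⋃ j ∈ Set.Iio N, {n : ℕ | n % N = j}) ∈ 𝒰 := by
      have huniv : (⋃ j ∈ Set.Iio N, {n : ℕ | n % N = j}) = Set.univ := by
        ext n
        simp only [Set.mem_iUnion, Set.mem_setOf_eq, Set.mem_univ, iff_true, Set.mem_Iio]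
        exact ⟨n % N, Nat.mod_lt n hNpos, rfl⟩
      rw [huniv]; exact Filter.univ_mem
    obtain ⟨k, hkN, hkU⟩ := (Ultrafilter.finite_biUnion_mem_iff (Set.finite_Iio N)).1 hpart
    rw [Set.mem_Iio] at hkN
    have hVcong : ∀ n, n % N = k → ∀ x : H, cycComp T N n x = cycComp T N k x := by
      intro n hn x
      unfold cycComp
      have hfn : (fun (y : H) (j : ℕ) => T (cyc N (j + 1 + n)) y)
          = fun (y : H) (j : ℕ) => T (cyc N (j + 1 + k)) y := by
        funext y j
        have h1 : n % N = k % N := by rw [hn, Nat.mod_eq_of_lt hkN]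
        have harg : (j + 1 + n) % N = (j + 1 + k) % N := by
          rw [Nat.add_mod (j + 1) n, Nat.add_mod (j + 1) k, h1]
        unfold cyc; rw [harg]
      rw [hfn]
    have hVnon : ∀ x y : H, ‖cycComp T N k x - cycComp T N k y‖ ≤ ‖x - y‖ :=
      fun x y => hPcnon k N x y
    have he : Tendsto (fun n => ‖u n - cycComp T N k (u n)‖) (𝒰 : Filter ℕ) (nhds 0) := by
      have h1 : Tendsto (fun n => ‖u n - cycComp T N n (u n)‖) (𝒰 : Filter ℕ) (nhds 0) :=
        hE0.mono_left h𝒰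
      refine Tendsto.congr' ?_ h1
      filter_upwards [hkU] with n hn
      rw [hVcong n hn]
    have hρV : ρ (cycComp T N k z) ≤ ρ z := by
      have hb : ∀ n, ‖u n - cycComp T N k z‖
          ≤ ‖u n - cycComp T N k (u n)‖ + ‖u n - z‖ := by
        intro n
        calc ‖u n - cycComp T N k z‖
            ≤ ‖u n - cycComp T N k (u n)‖ + ‖cycComp T N k (u n) - cycComp T N k z‖ :=
              norm_sub_le_norm_sub_add_norm_sub _ _ _
          _ ≤ ‖u n - cycComp T N k (u n)‖ + ‖u n - z‖ := add_le_add le_rfl (hVnon _ _)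
      have h2 : Tendsto (fun n => ‖u n - cycComp T N k (u n)‖ + ‖u n - z‖)
          (𝒰 : Filter ℕ) (nhds (0 + ρ z)) := he.add (hρ z).2
      have h3 := le_of_tendsto_of_tendsto' (hρ (cycComp T N k z)).2 h2 hb
      simpa using h3
    have hzfix : cycComp T N k z = z := by
      have h1 := hident (cycComp T N k z)
      have h2 : (ρ (cycComp T N k z)) ^ 2 ≤ (ρ z) ^ 2 := by
        nlinarith [(hρ z).1, (hρ (cycComp T N k z)).1, hρV]
      have h3 : ‖z - cycComp T N k z‖ = 0 := by
        nlinarith [norm_nonneg (z - cycComp T N k z), sq_nonneg ‖z - cycComp T N k z‖]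
      rw [norm_eq_zero, sub_eq_zero] at h3
      exact h3.symm
    have hzS : z ∈ S := by
      rw [hBauschke k hkN]; exact hzfix
    refine ⟨⟪F p, p - z⟫, ?_, ?_⟩
    · have h1 := hpVIP z hzS
      have hc : ⟪F p, p - z⟫ = -⟪z - p, F p⟫ := by
        rw [real_inner_comm, show p - z = -(z - p) by abel, inner_neg_left]
      rw [hc]; linarith
    · have h1 : ∀ n, ⟪F p, p - u n⟫ = ⟪F p, p - z⟫ + ⟪F p, z - u n⟫ := by
        intro n; rw [← inner_add_right]; congr 1; abel
      have h2 : Tendsto (fun n => ⟪F p, z - u n⟫) (𝒰 : Filter ℕ) (nhds 0) := by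
        have h3 : ∀ n, ⟪F p, z - u n⟫ = -⟪u n - z, F p⟫ := by
          intro n
          rw [real_inner_comm, show z - u n = -(u n - z) by abel, inner_neg_left]
        have h4 := (hweak (F p)).neg
        rw [neg_zero] at h4
        exact h4.congr fun n => (h3 n).symm
      have h5 := (tendsto_const_nhds (x := ⟪F p, p - z⟫)).add h2
      rw [add_zero] at h5
      exact h5.congr fun n => (h1 n).symm
  -- limsup condition
  have hlimsup : ∀ ε > 0, ∀ᶠ n in atTop, ⟪F p, p - u n⟫ ≤ ε := by
    intro ε hε
    by_contra hcon2
    have hfreq : ∃ᶠ n in atTop, ε < ⟪F p, p - u n⟫ := by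
      rw [Filter.not_eventually] at hcon2
      exact hcon2.mono fun n hn => lt_of_not_ge hn
    have hne : (atTop ⊓ Filter.principal {n : ℕ | ε < ⟪F p, p - u n⟫}).NeBot :=
      Filter.frequently_iff_neBot.1 hfreq
    obtain ⟨𝒰, h𝒰le⟩ := Filter.exists_ultrafilter_le (atTop ⊓ Filter.principal {n : ℕ | ε < ⟪F p, p - u n⟫})
    have h1 : (𝒰 : Filter ℕ) ≤ atTop := h𝒰le.trans inf_le_left
    have h2 : {n : ℕ | ε < ⟪F p, p - u n⟫} ∈ 𝒰 :=
      h𝒰le (Filter.mem_inf_of_right (Filter.mem_principal_self _))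
    obtain ⟨L, hL0, hLt⟩ := hkey 𝒰 h1
    have h3 : ε ≤ L := by
      refine ge_of_tendsto hLt ?_
      filter_upwards [h2] with n hn
      exact hn.le
    linarith
  -- final application of Xu's lemma
  set A : ℕ → ℝ := fun n => ‖u n - p‖ ^ 2 with hAdef
  set δ : ℕ → ℝ := fun n => 2 * μ / τ * ⟪F p, p - u (n + 1)⟫ with hδdef
  have hArec : ∀ n, A (n + 1) ≤ (1 - lam (n + 1) * τ) * A n + (lam (n + 1) * τ) * δ n + 0 := by
    intro n
    set l := lam (n + 1) with hldef
    set X := T (cyc N (n + 1)) (u n) with hXdef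
    set W := (X - (l * μ) • F X) - (p - (l * μ) • F p) with hWdef
    have hid2 : u (n + 1) - p = W - (l * μ) • F p := by
      rw [hrec n, hWdef]; abel
    have hWnorm : ‖W‖ ≤ (1 - l * τ) * ‖u n - p‖ :=
      le_trans (hstep n X p) (mul_le_mul_of_nonneg_left (hTp n (u n)) (hfac n))
    have hexpand : A (n + 1) = ‖W‖ ^ 2 - 2 * (l * μ) * ⟪W, F p⟫ + (l * μ) ^ 2 * ‖F p‖ ^ 2 := by
      show ‖u (n + 1) - p‖ ^ 2 = _
      rw [hid2, norm_sub_sq_real, real_inner_smul_right, norm_smul, Real.norm_eq_abs,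
        abs_of_nonneg (mul_nonneg (hlam0' (n + 1)).le hμ0.le), mul_pow]
      ring
    have hWip : ⟪W, F p⟫ = ⟪u (n + 1) - p, F p⟫ + (l * μ) * ‖F p‖ ^ 2 := by
      rw [show W = (u (n + 1) - p) + (l * μ) • F p by rw [hid2]; abel,
        inner_add_left, real_inner_smul_left, real_inner_self_eq_norm_sq]
    have hinner2 : ⟪u (n + 1) - p, F p⟫ = -⟪F p, p - u (n + 1)⟫ := by
      rw [real_inner_comm, show u (n + 1) - p = -(p - u (n + 1)) by abel, inner_neg_right]
    have hsq2 : ‖W‖ ^ 2 ≤ (1 - l * τ) ^ 2 * ‖u n - p‖ ^ 2 := by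
      have := pow_le_pow_left₀ (norm_nonneg W) hWnorm 2
      rw [mul_pow] at this
      exact this
    have hδeq : (l * τ) * δ n = 2 * (l * μ) * ⟪F p, p - u (n + 1)⟫ := by
      rw [hδdef]
      field_simp
    have hsq3 : (1 - l * τ) ^ 2 * A n ≤ (1 - l * τ) * A n := by
      have h01 : 0 ≤ 1 - l * τ := hfac n
      have h02 : 1 - l * τ ≤ 1 := by nlinarith [(hlam0' (n + 1)).le, hτ0.le]
      have h03 : 0 ≤ A n := sq_nonneg _
      have h04 : 0 ≤ l * τ := (mul_pos (hlam0' _) hτ0).le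
      nlinarith [mul_nonneg (mul_nonneg h01 h04) h03]
    have hsqFp : 0 ≤ (l * μ) ^ 2 * ‖F p‖ ^ 2 := by positivity
    have hAn : A n = ‖u n - p‖ ^ 2 := rfl
    rw [hexpand, hWip, hinner2]
    rw [hδeq] at *
    nlinarith [hsq2, hsq3, hsqFp]
  have hδcond : ∀ ε > 0, ∀ᶠ n in atTop, δ n ≤ ε := by
    intro ε hε
    have hε' : 0 < ε * τ / (2 * μ) := by positivity
    obtain ⟨M, hM⟩ := (hlimsup _ hε').exists_forall_of_atTop
    have h2 : ∀ᶠ n in atTop, ⟪F p, p - u (n + 1)⟫ ≤ ε * τ / (2 * μ) := by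
      filter_upwards [eventually_ge_atTop M] with n hn
      exact hM (n + 1) (by omega)
    filter_upwards [h2] with n hn
    have hmul : 2 * μ / τ * (ε * τ / (2 * μ)) = ε := by
      field_simp
    calc δ n = 2 * μ / τ * ⟪F p, p - u (n + 1)⟫ := rfl
      _ ≤ 2 * μ / τ * (ε * τ / (2 * μ)) := by
          apply mul_le_mul_of_nonneg_left hn (by positivity)
      _ = ε := hmul
  have hA0 : Tendsto A atTop (nhds 0) := by
    refine xu_lemma A (fun n => lam (n + 1) * τ) δ (fun _ => 0) (fun n => sq_nonneg _)
      (fun n => (mul_pos (hlam0' _) hτ0).le) hγ1 hγdiv hδcond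
      (fun _ => le_rfl) summable_zero (fun n => by simpa using hArec n)
  have hnorm0 : Tendsto (fun n => ‖u n - p‖) atTop (nhds 0) := by
    have h1 : ∀ n, ‖u n - p‖ = Real.sqrt (A n) := fun n => (Real.sqrt_sq (norm_nonneg _)).symm
    have h2 : Tendsto (fun n => Real.sqrt (A n)) atTop (nhds (Real.sqrt 0)) :=
      (Real.continuous_sqrt.tendsto 0).comp hA0
    rw [Real.sqrt_zero] at h2
    exact h2.congr fun n => (h1 n).symm
  exact tendsto_iff_norm_sub_tendsto_zero.2 hnorm0
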